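/- For every e ∈ ℂ^L and every h ∈ ℂ^{Ks}, x ∈ ℂ^{Ns}: |Re⟨ℋ(h,x) − X_0, 𝒜*(e)⟩| ≤ √(2s)·(max_{1≤i≤s}‖𝒜_i*(e)‖)·‖ℋ(h,x) − X_0‖_F, where ⟨U,V⟩ = Tr(U*V) is the Frobenius inner product, ‖𝒜_i*(e)‖ is the matrix operator norm, and 𝒜*(e) is the block-diagonal matrix with blocks 𝒜_i*(e). -/

import Mathlib

noncomputable section
open Finset ComplexConjugate

namespace RGD

/-- Squared Euclidean norm of a complex vector. -/
def vnormSq {n : ℕ} (v : Fin n → ℂ) : ℝ := ∑ j, ‖v j‖ ^ 2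

/-- Euclidean norm of a complex vector. -/
def vnorm {n : ℕ} (v : Fin n → ℂ) : ℝ := Real.sqrt (vnormSq v)

/-- Inner product, conjugate-linear in the first argument. -/
def vinner {n : ℕ} (u v : Fin n → ℂ) : ℂ := ∑ j, conj (u j) * v j

/-- Squared Frobenius norm of a matrix. -/
def frobSq {K N : ℕ} (Z : Matrix (Fin K) (Fin N) ℂ) : ℝ := ∑ k, ∑ j, ‖Z k j‖ ^ 2

/-- Frobenius norm of a matrix. -/
def frob {K N : ℕ} (Z : Matrix (Fin K) (Fin N) ℂ) : ℝ := Real.sqrt (frobSq Z)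

/-- Frobenius inner product `⟨U,V⟩ = Tr(U*V)`, conjugate-linear in the first argument. -/
def finner {K N : ℕ} (U V : Matrix (Fin K) (Fin N) ℂ) : ℂ := ∑ k, ∑ j, conj (U k j) * V k j

/-- Spectral (operator) norm of a matrix: sup of `‖Zv‖` over the closed unit ball. -/
def opNorm {K N : ℕ} (Z : Matrix (Fin K) (Fin N) ℂ) : ℝ :=
  sSup {r : ℝ | ∃ v : Fin N → ℂ, vnorm v ≤ 1 ∧ r = vnorm (Z.mulVec v)}

/-- Squared Frobenius norm of a block-diagonal matrix, given by its diagonal blocks. -/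
def famFrobSq {K N s : ℕ} (Z : Fin s → Matrix (Fin K) (Fin N) ℂ) : ℝ := ∑ i, frobSq (Z i)

/-- Frobenius norm of a block-diagonal matrix, given by its diagonal blocks. -/
def famFrob {K N s : ℕ} (Z : Fin s → Matrix (Fin K) (Fin N) ℂ) : ℝ := Real.sqrt (famFrobSq Z)

/-- The rank-one matrix `u v*`. -/
def rankOne {K N : ℕ} (u : Fin K → ℂ) (v : Fin N → ℂ) : Matrix (Fin K) (Fin N) ℂ :=
  Matrix.of fun k j => u k * conj (v j)

/-- `ℋ(h,x)`: block-diagonal matrix with `i`-th block `hᵢ xᵢ*`. -/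
def Hmap {K N s : ℕ} (h : Fin s → Fin K → ℂ) (x : Fin s → Fin N → ℂ) :
    Fin s → Matrix (Fin K) (Fin N) ℂ := fun i => rankOne (h i) (x i)

/-- `𝒜ᵢ(Z) = (bₗ* Z aₗ)ₗ`. -/
def calAi {K N L : ℕ} (b : Fin L → Fin K → ℂ) (a : Fin L → Fin N → ℂ)
    (Z : Matrix (Fin K) (Fin N) ℂ) : Fin L → ℂ :=
  fun l => vinner (b l) (Z.mulVec (a l))

/-- `𝒜(Z) = Σᵢ 𝒜ᵢ(Zᵢ)` on block-diagonal matrices. -/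
def calA {K N L s : ℕ} (b : Fin L → Fin K → ℂ) (a : Fin s → Fin L → Fin N → ℂ)
    (Z : Fin s → Matrix (Fin K) (Fin N) ℂ) : Fin L → ℂ :=
  fun l => ∑ i, calAi b (a i) (Z i) l

/-- `𝒜ᵢ*(z) = Σₗ zₗ bₗ aₗ*`. -/
def calAdj {K N L : ℕ} (b : Fin L → Fin K → ℂ) (a : Fin L → Fin N → ℂ)
    (z : Fin L → ℂ) : Matrix (Fin K) (Fin N) ℂ :=
  Matrix.of fun k j => ∑ l, z l * b l k * conj (a l j)

/-- `‖𝒜*(e)‖ = maxᵢ ‖𝒜ᵢ*(e)‖` (operator norms). -/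
def AadjNorm {K N L s : ℕ} (b : Fin L → Fin K → ℂ) (a : Fin s → Fin L → Fin N → ℂ)
    (e : Fin L → ℂ) : ℝ :=
  ⨆ i : Fin s, opNorm (calAdj b (a i) e)

/-- `B*B = I_K`, expressed in terms of the columns `bₗ` of `B*`. -/
def BtBeqI {K L : ℕ} (b : Fin L → Fin K → ℂ) : Prop :=
  ∀ k k' : Fin K, (∑ l, b l k * conj (b l k')) = if k = k' then (1 : ℂ) else 0

/-- `μ ≥ μ_h`, i.e. `√L ‖B h_{i0}‖_∞ ≤ μ ‖h_{i0}‖` for all `i`. -/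
def muhLe {K L s : ℕ} (b : Fin L → Fin K → ℂ) (h0 : Fin s → Fin K → ℂ) (μ : ℝ) : Prop :=
  ∀ i l, Real.sqrt L * ‖vinner (b l) (h0 i)‖ ≤ μ * vnorm (h0 i)

/-- `d₀ = √(Σᵢ d_{i0}²)`. -/
def dtot {s : ℕ} (d0 : Fin s → ℝ) : ℝ := Real.sqrt (∑ i, d0 i ^ 2)

/-- Condition number `κ = (maxᵢ d_{i0}) / (minᵢ d_{i0})`. -/
def kappa {s : ℕ} (d0 : Fin s → ℝ) : ℝ := (⨆ i, d0 i) / (⨅ i, d0 i)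

/-- The observation `y = 𝒜(ℋ(h₀,x₀)) + e`. -/
def yvec {K N L s : ℕ} (b : Fin L → Fin K → ℂ) (a : Fin s → Fin L → Fin N → ℂ)
    (h0 : Fin s → Fin K → ℂ) (x0 : Fin s → Fin N → ℂ) (e : Fin L → ℂ) : Fin L → ℂ :=
  fun l => calA b a (Hmap h0 x0) l + e l

/-- `F(h,x) = ‖𝒜(ℋ(h,x)) − y‖²`. -/
def Fobj {K N L s : ℕ} (b : Fin L → Fin K → ℂ) (a : Fin s → Fin L → Fin N → ℂ)
    (h0 : Fin s → Fin K → ℂ) (x0 : Fin s → Fin N → ℂ) (e : Fin L → ℂ)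
    (h : Fin s → Fin K → ℂ) (x : Fin s → Fin N → ℂ) : ℝ :=
  vnormSq (fun l => calA b a (Hmap h x) l - yvec b a h0 x0 e l)

def G0 (z : ℝ) : ℝ := max (z - 1) 0 ^ 2

def G0' (z : ℝ) : ℝ := 2 * max (z - 1) 0

/-- The `i`-th regularizer `Gᵢ(hᵢ,xᵢ)` (including the factor `ρ`). -/
def Gi {K N L : ℕ} (b : Fin L → Fin K → ℂ) (ρ μ di : ℝ)
    (hi : Fin K → ℂ) (xi : Fin N → ℂ) : ℝ :=
  ρ * (G0 (vnormSq hi / (2 * di)) + G0 (vnormSq xi / (2 * di))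
    + ∑ l, G0 ((L : ℝ) * ‖vinner (b l) hi‖ ^ 2 / (8 * di * μ ^ 2)))

/-- The regularizer `G(h,x) = Σᵢ Gᵢ(hᵢ,xᵢ)`. -/
def Greg {K N L s : ℕ} (b : Fin L → Fin K → ℂ) (ρ μ : ℝ) (dd : Fin s → ℝ)
    (h : Fin s → Fin K → ℂ) (x : Fin s → Fin N → ℂ) : ℝ :=
  ∑ i, Gi b ρ μ (dd i) (h i) (x i)

/-- `F̃ = F + G`. -/
def Ftil {K N L s : ℕ} (b : Fin L → Fin K → ℂ) (a : Fin s → Fin L → Fin N → ℂ)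
    (h0 : Fin s → Fin K → ℂ) (x0 : Fin s → Fin N → ℂ) (e : Fin L → ℂ)
    (ρ μ : ℝ) (dd : Fin s → ℝ)
    (h : Fin s → Fin K → ℂ) (x : Fin s → Fin N → ℂ) : ℝ :=
  Fobj b a h0 x0 e h x + Greg b ρ μ dd h x

/-- The residual `𝒜(ℋ(h,x)) − y`. -/
def residual {K N L s : ℕ} (b : Fin L → Fin K → ℂ) (a : Fin s → Fin L → Fin N → ℂ)
    (h0 : Fin s → Fin K → ℂ) (x0 : Fin s → Fin N → ℂ) (e : Fin L → ℂ)
    (h : Fin s → Fin K → ℂ) (x : Fin s → Fin N → ℂ) : Fin L → ℂ :=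
  fun l => calA b a (Hmap h x) l - yvec b a h0 x0 e l

/-- Wirtinger gradient `∇F_{hᵢ} = 𝒜ᵢ*(𝒜(ℋ(h,x)) − y) xᵢ`. -/
def gradFh {K N L s : ℕ} (b : Fin L → Fin K → ℂ) (a : Fin s → Fin L → Fin N → ℂ)
    (h0 : Fin s → Fin K → ℂ) (x0 : Fin s → Fin N → ℂ) (e : Fin L → ℂ)
    (h : Fin s → Fin K → ℂ) (x : Fin s → Fin N → ℂ) (i : Fin s) : Fin K → ℂ :=
  (calAdj b (a i) (residual b a h0 x0 e h x)).mulVec (x i)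

/-- Wirtinger gradient `∇F_{xᵢ} = (𝒜ᵢ*(𝒜(ℋ(h,x)) − y))* hᵢ`. -/
def gradFx {K N L s : ℕ} (b : Fin L → Fin K → ℂ) (a : Fin s → Fin L → Fin N → ℂ)
    (h0 : Fin s → Fin K → ℂ) (x0 : Fin s → Fin N → ℂ) (e : Fin L → ℂ)
    (h : Fin s → Fin K → ℂ) (x : Fin s → Fin N → ℂ) (i : Fin s) : Fin N → ℂ :=
  (calAdj b (a i) (residual b a h0 x0 e h x)).conjTranspose.mulVec (h i)

/-- Wirtinger gradient `∇G_{hᵢ}`. -/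
def gradGh {K L s : ℕ} (b : Fin L → Fin K → ℂ) (ρ μ : ℝ) (dd : Fin s → ℝ)
    (h : Fin s → Fin K → ℂ) (i : Fin s) : Fin K → ℂ :=
  fun k => ((ρ / (2 * dd i) : ℝ) : ℂ) *
    (((G0' (vnormSq (h i) / (2 * dd i)) : ℝ) : ℂ) * h i k
      + (((L : ℝ) / (4 * μ ^ 2) : ℝ) : ℂ) *
        ∑ l, ((G0' ((L : ℝ) * ‖vinner (b l) (h i)‖ ^ 2 / (8 * dd i * μ ^ 2)) : ℝ) : ℂ)
          * (vinner (b l) (h i) * b l k))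

/-- Wirtinger gradient `∇G_{xᵢ}`. -/
def gradGx {N s : ℕ} (ρ : ℝ) (dd : Fin s → ℝ)
    (x : Fin s → Fin N → ℂ) (i : Fin s) : Fin N → ℂ :=
  fun j => ((ρ / (2 * dd i) : ℝ) : ℂ) * (((G0' (vnormSq (x i) / (2 * dd i)) : ℝ) : ℂ) * x i j)

/-- `∇F̃_{hᵢ} = ∇F_{hᵢ} + ∇G_{hᵢ}`. -/
def gradH {K N L s : ℕ} (b : Fin L → Fin K → ℂ) (a : Fin s → Fin L → Fin N → ℂ)
    (h0 : Fin s → Fin K → ℂ) (x0 : Fin s → Fin N → ℂ) (e : Fin L → ℂ)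
    (ρ μ : ℝ) (dd : Fin s → ℝ)
    (h : Fin s → Fin K → ℂ) (x : Fin s → Fin N → ℂ) (i : Fin s) : Fin K → ℂ :=
  fun k => gradFh b a h0 x0 e h x i k + gradGh b ρ μ dd h i k

/-- `∇F̃_{xᵢ} = ∇F_{xᵢ} + ∇G_{xᵢ}`. -/
def gradX {K N L s : ℕ} (b : Fin L → Fin K → ℂ) (a : Fin s → Fin L → Fin N → ℂ)
    (h0 : Fin s → Fin K → ℂ) (x0 : Fin s → Fin N → ℂ) (e : Fin L → ℂ)
    (ρ μ : ℝ) (dd : Fin s → ℝ)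
    (h : Fin s → Fin K → ℂ) (x : Fin s → Fin N → ℂ) (i : Fin s) : Fin N → ℂ :=
  fun j => gradFx b a h0 x0 e h x i j + gradGx ρ dd x i j

/-- `‖∇F̃(h,x)‖²` (squared norm of the stacked Wirtinger gradient). -/
def gradNormSq {K N L s : ℕ} (b : Fin L → Fin K → ℂ) (a : Fin s → Fin L → Fin N → ℂ)
    (h0 : Fin s → Fin K → ℂ) (x0 : Fin s → Fin N → ℂ) (e : Fin L → ℂ)
    (ρ μ : ℝ) (dd : Fin s → ℝ)
    (h : Fin s → Fin K → ℂ) (x : Fin s → Fin N → ℂ) : ℝ :=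
  ∑ i, vnormSq (gradH b a h0 x0 e ρ μ dd h x i) + ∑ i, vnormSq (gradX b a h0 x0 e ρ μ dd h x i)

/-- `‖∇F̃(h',x') − ∇F̃(h,x)‖²`. -/
def gradDiffNormSq {K N L s : ℕ} (b : Fin L → Fin K → ℂ) (a : Fin s → Fin L → Fin N → ℂ)
    (h0 : Fin s → Fin K → ℂ) (x0 : Fin s → Fin N → ℂ) (e : Fin L → ℂ)
    (ρ μ : ℝ) (dd : Fin s → ℝ)
    (h : Fin s → Fin K → ℂ) (x : Fin s → Fin N → ℂ)
    (h' : Fin s → Fin K → ℂ) (x' : Fin s → Fin N → ℂ) : ℝ :=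
  ∑ i, vnormSq (fun k => gradH b a h0 x0 e ρ μ dd h' x' i k - gradH b a h0 x0 e ρ μ dd h x i k)
  + ∑ i, vnormSq (fun j => gradX b a h0 x0 e ρ μ dd h' x' i j - gradX b a h0 x0 e ρ μ dd h x i j)

/-- Membership in `𝒩_d`. -/
def inNd {K N s : ℕ} (d0 : Fin s → ℝ)
    (h : Fin s → Fin K → ℂ) (x : Fin s → Fin N → ℂ) : Prop :=
  ∀ i, vnorm (h i) ≤ 2 * Real.sqrt (d0 i) ∧ vnorm (x i) ≤ 2 * Real.sqrt (d0 i)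

/-- Membership in `𝒩_μ`. -/
def inNmu {K L s : ℕ} (b : Fin L → Fin K → ℂ) (d0 : Fin s → ℝ) (μ : ℝ)
    (h : Fin s → Fin K → ℂ) : Prop :=
  ∀ i, ∀ l, Real.sqrt L * ‖vinner (b l) (h i)‖ ≤ 4 * Real.sqrt (d0 i) * μ

/-- `δᵢ(hᵢ,xᵢ) = ‖hᵢxᵢ* − h_{i0}x_{i0}*‖_F / d_{i0}`. -/
def deltaI {K N : ℕ} (h0i : Fin K → ℂ) (x0i : Fin N → ℂ) (d0i : ℝ)
    (hi : Fin K → ℂ) (xi : Fin N → ℂ) : ℝ :=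
  frob (rankOne hi xi - rankOne h0i x0i) / d0i

/-- Membership in `𝒩_ε`. -/
def inNeps {K N s : ℕ} (h0 : Fin s → Fin K → ℂ) (x0 : Fin s → Fin N → ℂ)
    (d0 : Fin s → ℝ) (ε : ℝ)
    (h : Fin s → Fin K → ℂ) (x : Fin s → Fin N → ℂ) : Prop :=
  ∀ i, deltaI (h0 i) (x0 i) (d0 i) (h i) (x i) ≤ ε

/-- The global relative error `δ(h,x) = ‖ℋ(h,x) − X₀‖_F / d₀`. -/
def deltaTot {K N s : ℕ} (h0 : Fin s → Fin K → ℂ) (x0 : Fin s → Fin N → ℂ)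
    (d0 : Fin s → ℝ)
    (h : Fin s → Fin K → ℂ) (x : Fin s → Fin N → ℂ) : ℝ :=
  famFrob (fun i => Hmap h x i - Hmap h0 x0 i) / dtot d0

/-- Membership in `𝒩_F̃`. -/
def inNF {K N L s : ℕ} (b : Fin L → Fin K → ℂ) (a : Fin s → Fin L → Fin N → ℂ)
    (h0 : Fin s → Fin K → ℂ) (x0 : Fin s → Fin N → ℂ) (e : Fin L → ℂ)
    (d0 : Fin s → ℝ) (ρ μ : ℝ) (dd : Fin s → ℝ) (ε : ℝ)
    (h : Fin s → Fin K → ℂ) (x : Fin s → Fin N → ℂ) : Prop :=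
  Ftil b a h0 x0 e ρ μ dd h x ≤ ε ^ 2 * dtot d0 ^ 2 / (3 * (s : ℝ) * kappa d0 ^ 2) + vnormSq e

/-- The Local Restricted Isometry Property on `𝒩_d ∩ 𝒩_μ ∩ 𝒩_ε`. -/
def LocalRIP {K N L s : ℕ} (b : Fin L → Fin K → ℂ) (a : Fin s → Fin L → Fin N → ℂ)
    (h0 : Fin s → Fin K → ℂ) (x0 : Fin s → Fin N → ℂ)
    (d0 : Fin s → ℝ) (μ ε : ℝ) : Prop :=
  ∀ (h : Fin s → Fin K → ℂ) (x : Fin s → Fin N → ℂ),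
    inNd d0 h x → inNmu b d0 μ h → inNeps h0 x0 d0 ε h x →
      (2 / 3) * famFrobSq (fun i => Hmap h x i - Hmap h0 x0 i)
          ≤ vnormSq (calA b a fun i => Hmap h x i - Hmap h0 x0 i)
      ∧ vnormSq (calA b a fun i => Hmap h x i - Hmap h0 x0 i)
          ≤ (3 / 2) * famFrobSq (fun i => Hmap h x i - Hmap h0 x0 i)

/-- `α_{i1} = ⟨h_{i0}, hᵢ⟩ / d_{i0}`. -/
def alpha1 {K s : ℕ} (h0 : Fin s → Fin K → ℂ) (d0 : Fin s → ℝ)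
    (h : Fin s → Fin K → ℂ) (i : Fin s) : ℂ :=
  vinner (h0 i) (h i) / ((d0 i : ℝ) : ℂ)

/-- `α_{i2} = ⟨x_{i0}, xᵢ⟩ / d_{i0}`. -/
def alpha2 {N s : ℕ} (x0 : Fin s → Fin N → ℂ) (d0 : Fin s → ℝ)
    (x : Fin s → Fin N → ℂ) (i : Fin s) : ℂ :=
  vinner (x0 i) (x i) / ((d0 i : ℝ) : ℂ)

/-- `δ₀ = δ/10`. -/
def delta0 {K N s : ℕ} (h0 : Fin s → Fin K → ℂ) (x0 : Fin s → Fin N → ℂ)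
    (d0 : Fin s → ℝ) (h : Fin s → Fin K → ℂ) (x : Fin s → Fin N → ℂ) : ℝ :=
  deltaTot h0 x0 d0 h x / 10

/-- `αᵢ = (1−δ₀)α_{i1}` if `‖hᵢ‖ ≥ ‖xᵢ‖`, else `1/((1−δ₀) conj(α_{i2}))`. -/
def alphaC {K N s : ℕ} (h0 : Fin s → Fin K → ℂ) (x0 : Fin s → Fin N → ℂ)
    (d0 : Fin s → ℝ) (h : Fin s → Fin K → ℂ) (x : Fin s → Fin N → ℂ) (i : Fin s) : ℂ :=
  if vnorm (x i) ≤ vnorm (h i)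
  then ((1 - delta0 h0 x0 d0 h x : ℝ) : ℂ) * alpha1 h0 d0 h i
  else 1 / (((1 - delta0 h0 x0 d0 h x : ℝ) : ℂ) * conj (alpha2 x0 d0 x i))

/-- `Δhᵢ = hᵢ − αᵢ h_{i0}`. -/
def dh {K N s : ℕ} (h0 : Fin s → Fin K → ℂ) (x0 : Fin s → Fin N → ℂ)
    (d0 : Fin s → ℝ) (h : Fin s → Fin K → ℂ) (x : Fin s → Fin N → ℂ) (i : Fin s) :
    Fin K → ℂ :=
  fun k => h i k - alphaC h0 x0 d0 h x i * h0 i k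

/-- `Δxᵢ = xᵢ − conj(αᵢ)⁻¹ x_{i0}`. -/
def dx {K N s : ℕ} (h0 : Fin s → Fin K → ℂ) (x0 : Fin s → Fin N → ℂ)
    (d0 : Fin s → ℝ) (h : Fin s → Fin K → ℂ) (x : Fin s → Fin N → ℂ) (i : Fin s) :
    Fin N → ℂ :=
  fun j => x i j - (conj (alphaC h0 x0 d0 h x i))⁻¹ * x0 i j

/-- `σ²_max(h,x) = maxₗ Σᵢ |bₗ*hᵢ|² ‖xᵢ‖²`. -/
def sigmaMaxSq {K N L s : ℕ} (b : Fin L → Fin K → ℂ)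
    (h : Fin s → Fin K → ℂ) (x : Fin s → Fin N → ℂ) : ℝ :=
  ⨆ l : Fin L, ∑ i, ‖vinner (b l) (h i)‖ ^ 2 * vnormSq (x i)

/-- The rank-one bound (Lemma: `𝒜` on block-diagonal matrices with rank-1 blocks). -/
def RankOneBound {K N L s : ℕ} (b : Fin L → Fin K → ℂ)
    (a : Fin s → Fin L → Fin N → ℂ) : Prop :=
  ∀ (h : Fin s → Fin K → ℂ) (x : Fin s → Fin N → ℂ),
    vnormSq (calA b a (Hmap h x)) ≤
      4 / 3 * famFrobSq (Hmap h x)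
      + 2 * Real.sqrt (2 * (s : ℝ) * famFrobSq (Hmap h x) * sigmaMaxSq b h x
          * ((K : ℝ) + N) * Real.log L)
      + 8 * (s : ℝ) * sigmaMaxSq b h x * ((K : ℝ) + N) * Real.log L

/-- The subspace `Tᵢ = {h_{i0} v* + u x_{i0}*}`. -/
def Tspace {K N : ℕ} (h0i : Fin K → ℂ) (x0i : Fin N → ℂ) :
    Set (Matrix (Fin K) (Fin N) ℂ) :=
  {Z | ∃ (u : Fin K → ℂ) (v : Fin N → ℂ), Z = rankOne h0i v + rankOne u x0i}

/-- `P` is the orthogonal projection onto `Tᵢ` w.r.t. the Frobenius inner product. -/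
def IsFrobProj {K N : ℕ} (h0i : Fin K → ℂ) (x0i : Fin N → ℂ)
    (P : Matrix (Fin K) (Fin N) ℂ → Matrix (Fin K) (Fin N) ℂ) : Prop :=
  ∀ Z, P Z ∈ Tspace h0i x0i ∧ ∀ W ∈ Tspace h0i x0i, finner W (Z - P Z) = 0

/-- Operator norm of `𝒜ᵢ` from `(ℂ^{K×N}, ‖·‖_F)` to `(ℂ^L, ‖·‖)`. -/
def calAiOpNorm {K N L : ℕ} (b : Fin L → Fin K → ℂ) (a : Fin L → Fin N → ℂ) : ℝ :=
  sSup {r : ℝ | ∃ Z : Matrix (Fin K) (Fin N) ℂ, frob Z ≤ 1 ∧ r = vnorm (calAi b a Z)}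

/-- Operator norm of `𝒜` from block-diagonal matrices with `‖·‖_F` to `ℂ^L`. -/
def calAOpNorm {K N L s : ℕ} (b : Fin L → Fin K → ℂ)
    (a : Fin s → Fin L → Fin N → ℂ) : ℝ :=
  sSup {r : ℝ | ∃ Z : Fin s → Matrix (Fin K) (Fin N) ℂ, famFrob Z ≤ 1 ∧ r = vnorm (calA b a Z)}

/-- Norm of a stacked vector in `ℂ^{ns}`. -/
def stackNorm {n s : ℕ} (u : Fin s → Fin n → ℂ) : ℝ := Real.sqrt (∑ i, vnormSq (u i))

/-- Norm of a point `z = (h,x) ∈ ℂ^{s(K+N)}`. -/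
def pairNorm {K N s : ℕ} (u : Fin s → Fin K → ℂ) (v : Fin s → Fin N → ℂ) : ℝ :=
  Real.sqrt (∑ i, vnormSq (u i) + ∑ i, vnormSq (v i))

/-- `z + t • w` componentwise, `t` real. -/
def shiftV {n s : ℕ} (u w : Fin s → Fin n → ℂ) (t : ℝ) : Fin s → Fin n → ℂ :=
  fun i k => u i k + (t : ℂ) * w i k

/-- `σ_max(h) = maxₗ √(Σᵢ |bₗ*hᵢ|²)` (unit `xᵢ`'s). -/
def sigmaMaxU {K L s : ℕ} (b : Fin L → Fin K → ℂ) (h : Fin s → Fin K → ℂ) : ℝ :=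
  ⨆ l, Real.sqrt (∑ i, ‖vinner (b l) (h i)‖ ^ 2)

-- basic facts
lemma vnormSq_nonneg {n : ℕ} (v : Fin n → ℂ) : 0 ≤ vnormSq v :=
  Finset.sum_nonneg fun _ _ => by positivity

lemma vnorm_nonneg {n : ℕ} (v : Fin n → ℂ) : 0 ≤ vnorm v := Real.sqrt_nonneg _

lemma vnorm_sq {n : ℕ} (v : Fin n → ℂ) : vnorm v ^ 2 = vnormSq v :=
  Real.sq_sqrt (vnormSq_nonneg v)

lemma frobSq_nonneg {K N : ℕ} (Z : Matrix (Fin K) (Fin N) ℂ) : 0 ≤ frobSq Z :=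
  Finset.sum_nonneg fun _ _ => Finset.sum_nonneg fun _ _ => by positivity

lemma frob_nonneg {K N : ℕ} (Z : Matrix (Fin K) (Fin N) ℂ) : 0 ≤ frob Z := Real.sqrt_nonneg _

lemma frob_sq {K N : ℕ} (Z : Matrix (Fin K) (Fin N) ℂ) : frob Z ^ 2 = frobSq Z :=
  Real.sq_sqrt (frobSq_nonneg Z)

def toE {n : ℕ} (v : Fin n → ℂ) : EuclideanSpace ℂ (Fin n) := (WithLp.equiv 2 _).symm v

lemma vnorm_eq_norm {n : ℕ} (v : Fin n → ℂ) : vnorm v = ‖toE v‖ := by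
  rw [EuclideanSpace.norm_eq]; rfl

lemma vinner_eq_inner {n : ℕ} (u v : Fin n → ℂ) : vinner u v = inner ℂ (toE u) (toE v) := by
  simp [vinner, toE, PiLp.inner_apply, RCLike.inner_apply, mul_comm]

lemma vinner_cs {n : ℕ} (u v : Fin n → ℂ) : ‖vinner u v‖ ≤ vnorm u * vnorm v := by
  rw [vinner_eq_inner, vnorm_eq_norm, vnorm_eq_norm]
  exact norm_inner_le_norm _ _

lemma vnormSq_eq_zero {n : ℕ} {v : Fin n → ℂ} (h : vnormSq v = 0) : v = 0 := by
  funext j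
  have := (Finset.sum_eq_zero_iff_of_nonneg (fun i _ => by positivity)).mp h j (Finset.mem_univ j)
  simpa using this

-- mulVec bound by Frobenius norm
lemma vnorm_mulVec_le_frob {K N : ℕ} (M : Matrix (Fin K) (Fin N) ℂ) (v : Fin N → ℂ) :
    vnorm (M.mulVec v) ≤ frob M * vnorm v := by
  have h1 : vnormSq (M.mulVec v) ≤ frobSq M * vnormSq v := by
    have hk : ∀ k : Fin K, ‖(M.mulVec v) k‖ ^ 2 ≤ (∑ j, ‖M k j‖ ^ 2) * vnormSq v := by
      intro k
      have : (M.mulVec v) k = vinner (fun j => conj (M k j)) v := by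
        simp [Matrix.mulVec, vinner, dotProduct]
      rw [this]
      have h2 := vinner_cs (fun j => conj (M k j)) v
      have h3 : vnorm (fun j => conj (M k j)) = Real.sqrt (∑ j, ‖M k j‖ ^ 2) := by
        simp [vnorm, vnormSq]
      calc ‖vinner (fun j => conj (M k j)) v‖ ^ 2
          ≤ (vnorm (fun j => conj (M k j)) * vnorm v) ^ 2 := by
            apply pow_le_pow_left₀ (norm_nonneg _) h2
        _ = (∑ j, ‖M k j‖ ^ 2) * vnormSq v := by
            rw [h3, mul_pow, Real.sq_sqrt (Finset.sum_nonneg fun _ _ => by positivity), vnorm_sq]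
    calc vnormSq (M.mulVec v) = ∑ k, ‖(M.mulVec v) k‖ ^ 2 := rfl
      _ ≤ ∑ k, (∑ j, ‖M k j‖ ^ 2) * vnormSq v := Finset.sum_le_sum fun k _ => hk k
      _ = frobSq M * vnormSq v := by rw [frobSq, Finset.sum_mul]
  calc vnorm (M.mulVec v) = Real.sqrt (vnormSq (M.mulVec v)) := rfl
    _ ≤ Real.sqrt (frobSq M * vnormSq v) := Real.sqrt_le_sqrt h1
    _ = frob M * vnorm v := by rw [Real.sqrt_mul (frobSq_nonneg M)]; rfl

lemma opNorm_bddAbove {K N : ℕ} (M : Matrix (Fin K) (Fin N) ℂ) :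
    BddAbove {r : ℝ | ∃ v : Fin N → ℂ, vnorm v ≤ 1 ∧ r = vnorm (M.mulVec v)} := by
  refine ⟨frob M, ?_⟩
  rintro r ⟨v, hv, rfl⟩
  calc vnorm (M.mulVec v) ≤ frob M * vnorm v := vnorm_mulVec_le_frob M v
    _ ≤ frob M * 1 := by
        exact mul_le_mul_of_nonneg_left hv (frob_nonneg M)
    _ = frob M := mul_one _

lemma opNorm_nonneg {K N : ℕ} (M : Matrix (Fin K) (Fin N) ℂ) : 0 ≤ opNorm M := by
  have h0 : (0:ℝ) ∈ {r : ℝ | ∃ v : Fin N → ℂ, vnorm v ≤ 1 ∧ r = vnorm (M.mulVec v)} := by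
    refine ⟨0, ?_, ?_⟩
    · simp [vnorm, vnormSq]
    · simp [Matrix.mulVec_zero, vnorm, vnormSq]
  exact le_csSup (opNorm_bddAbove M) h0

lemma vnormSq_smul {n : ℕ} (c : ℂ) (v : Fin n → ℂ) :
    vnormSq (fun j => c * v j) = ‖c‖^2 * vnormSq v := by
  simp [vnormSq, Finset.mul_sum, mul_pow, norm_mul]

lemma vnorm_smul {n : ℕ} (c : ℝ) (hc : 0 ≤ c) (v : Fin n → ℂ) :
    vnorm (fun j => (c : ℂ) * v j) = c * vnorm v := by
  rw [vnorm, vnormSq_smul, Complex.norm_real, Real.norm_eq_abs, abs_of_nonneg hc,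
    Real.sqrt_mul (by positivity), Real.sqrt_sq hc]; rfl

lemma vnorm_mulVec_le {K N : ℕ} (M : Matrix (Fin K) (Fin N) ℂ) (v : Fin N → ℂ) :
    vnorm (M.mulVec v) ≤ opNorm M * vnorm v := by
  by_cases hv : vnorm v = 0
  · have hz : v = 0 := vnormSq_eq_zero (le_antisymm (Real.sqrt_eq_zero'.mp hv) (vnormSq_nonneg v))
    subst hz
    simp [Matrix.mulVec_zero, hv, mul_comm]
    simp [vnorm, vnormSq]
  · have hvpos : 0 < vnorm v := lt_of_le_of_ne (vnorm_nonneg v) (Ne.symm hv)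
    set c : ℝ := (vnorm v)⁻¹ with hc
    have hcpos : 0 < c := inv_pos.mpr hvpos
    set w : Fin N → ℂ := fun j => (c : ℂ) * v j with hw
    have hwn : vnorm w = 1 := by
      rw [hw, vnorm_smul c hcpos.le, hc, inv_mul_cancel₀ hv]
    have hMw : M.mulVec w = fun k => (c:ℂ) * (M.mulVec v) k := by
      funext k
      simp [hw, Matrix.mulVec, dotProduct, Finset.mul_sum]
      congr 1; funext j; ring
    have hmem : vnorm (M.mulVec w) ∈
        {r : ℝ | ∃ u : Fin N → ℂ, vnorm u ≤ 1 ∧ r = vnorm (M.mulVec u)} := ⟨w, hwn.le, rfl⟩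
    have hle : vnorm (M.mulVec w) ≤ opNorm M := le_csSup (opNorm_bddAbove M) hmem
    have : vnorm (M.mulVec w) = c * vnorm (M.mulVec v) := by
      rw [hMw, vnorm_smul c hcpos.le]
    rw [this] at hle
    calc vnorm (M.mulVec v) = (c * vnorm (M.mulVec v)) * vnorm v := by
          rw [hc, mul_comm (vnorm v)⁻¹, mul_assoc, inv_mul_cancel₀ hv, mul_one]
      _ ≤ opNorm M * vnorm v := mul_le_mul_of_nonneg_right hle (vnorm_nonneg v)


lemma finner_rankOne {K N : ℕ} (u : Fin K → ℂ) (v : Fin N → ℂ) (M : Matrix (Fin K) (Fin N) ℂ) :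
    finner (rankOne u v) M = vinner u (M.mulVec v) := by
  simp only [finner, rankOne, vinner, Matrix.mulVec, dotProduct, Matrix.of_apply,
    Finset.mul_sum, map_mul, Complex.conj_conj]
  congr 1; funext k; congr 1; funext j; ring

lemma finner_add_left {K N : ℕ} (A B M : Matrix (Fin K) (Fin N) ℂ) :
    finner (A + B) M = finner A M + finner B M := by
  simp only [finner, Matrix.add_apply, map_add, add_mul, Finset.sum_add_distrib]

lemma vinner_self {n : ℕ} (v : Fin n → ℂ) : vinner v v = (vnormSq v : ℝ) := by
  simp only [vinner, vnormSq]
  push_cast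
  congr 1; funext j
  rw [Complex.conj_mul']

lemma finner_self_re {K N : ℕ} (Z : Matrix (Fin K) (Fin N) ℂ) : (finner Z Z).re = frobSq Z := by
  simp only [finner, frobSq, Complex.re_sum]
  congr 1; funext k; congr 1; funext j
  rw [Complex.conj_mul']
  norm_cast

lemma finner_rankOne_rankOne {K N : ℕ} (u u' : Fin K → ℂ) (v v' : Fin N → ℂ) :
    finner (rankOne u v) (rankOne u' v') = vinner u u' * conj (vinner v v') := by
  rw [show conj (vinner v v') = ∑ j, v j * conj (v' j) by
    simp [vinner, map_sum, map_mul, Complex.conj_conj]]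
  rw [vinner, Finset.sum_mul_sum]
  simp only [finner, rankOne, vinner, Matrix.of_apply, map_mul, Complex.conj_conj]
  congr 1; funext k; congr 1; funext j; ring

lemma vinner_conj {n : ℕ} (u v : Fin n → ℂ) : vinner u v = conj (vinner v u) := by
  simp only [vinner, map_sum, map_mul, Complex.conj_conj]
  congr 1; funext j; ring

lemma finner_add_right {K N : ℕ} (M A B : Matrix (Fin K) (Fin N) ℂ) :
    finner M (A + B) = finner M A + finner M B := by
  simp only [finner, Matrix.add_apply, mul_add, Finset.sum_add_distrib]

lemma frobSq_rankOne {K N : ℕ} (u : Fin K → ℂ) (v : Fin N → ℂ) :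
    frobSq (rankOne u v) = vnormSq u * vnormSq v := by
  simp only [frobSq, rankOne, Matrix.of_apply, norm_mul, mul_pow, vnormSq,
    RCLike.norm_conj, ← Finset.mul_sum, ← Finset.sum_mul]

lemma add_le_sqrt_two {x y : ℝ} (hx : 0 ≤ x) (hy : 0 ≤ y) :
    x + y ≤ Real.sqrt 2 * Real.sqrt (x^2 + y^2) := by
  rw [← Real.sqrt_mul (by norm_num)]
  have h1 : (0:ℝ) ≤ 2 * (x^2 + y^2) := by positivity
  have h2 := Real.sq_sqrt h1
  have h3 := Real.sqrt_nonneg (2 * (x^2 + y^2))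
  nlinarith [sq_nonneg (x - y), sq_nonneg (x + y - Real.sqrt (2 * (x^2 + y^2)))]

/-- Key per-block bound. -/
lemma block_bound {K N : ℕ} (h0 hv : Fin K → ℂ) (x0 xv : Fin N → ℂ)
    (M : Matrix (Fin K) (Fin N) ℂ) :
    ‖finner (rankOne hv xv - rankOne h0 x0) M‖
      ≤ Real.sqrt 2 * opNorm M * frob (rankOne hv xv - rankOne h0 x0) := by
  by_cases hz : vnormSq h0 = 0
  · have h00 : h0 = 0 := vnormSq_eq_zero hz
    have hr0 : rankOne hv xv - rankOne h0 x0 = rankOne hv xv := by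
      subst h00; funext k j; simp [rankOne]
    rw [hr0, finner_rankOne]
    have hfr : frob (rankOne hv xv) = vnorm hv * vnorm xv := by
      rw [frob, frobSq_rankOne, Real.sqrt_mul (vnormSq_nonneg hv)]; rfl
    calc ‖vinner hv (M.mulVec xv)‖ ≤ vnorm hv * vnorm (M.mulVec xv) := vinner_cs _ _
      _ ≤ vnorm hv * (opNorm M * vnorm xv) := by
          exact mul_le_mul_of_nonneg_left (vnorm_mulVec_le M xv) (vnorm_nonneg hv)
      _ = 1 * opNorm M * frob (rankOne hv xv) := by rw [hfr]; ring
      _ ≤ Real.sqrt 2 * opNorm M * frob (rankOne hv xv) := by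
          have h1 : (1:ℝ) ≤ Real.sqrt 2 := by
            rw [show (1:ℝ) = Real.sqrt 1 by simp]
            exact Real.sqrt_le_sqrt (by norm_num)
          have := mul_nonneg (opNorm_nonneg M) (frob_nonneg (rankOne hv xv))
          nlinarith
  · have hzC : ((vnormSq h0 : ℝ) : ℂ) ≠ 0 := by
      exact_mod_cast hz
    set Z := rankOne hv xv - rankOne h0 x0 with hZ
    set c : ℂ := vinner h0 hv / ((vnormSq h0 : ℝ) : ℂ) with hc
    set hperp : Fin K → ℂ := fun k => hv k - c * h0 k with hperp_def
    set w : Fin N → ℂ := fun j => conj c * xv j - x0 j with hw_def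
    have hdecomp : Z = rankOne h0 w + rankOne hperp xv := by
      funext k j
      simp only [hZ, hw_def, hperp_def, rankOne, Matrix.sub_apply, Matrix.add_apply,
        Matrix.of_apply, map_sub, map_mul, Complex.conj_conj]
      ring
    have horth : vinner h0 hperp = 0 := by
      have h1 : vinner h0 hperp = vinner h0 hv - c * vinner h0 h0 := by
        simp only [vinner, hperp_def, mul_sub, Finset.sum_sub_distrib, Finset.mul_sum]
        congr 1
        exact Finset.sum_congr rfl fun k _ => by ring
      rw [h1, vinner_self, hc]
      field_simp
      ring
    have horth' : vinner hperp h0 = 0 := by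
      have : vinner hperp h0 = conj (vinner h0 hperp) := vinner_conj _ _
      rw [this, horth, map_zero]
    have hffZ : finner Z M = vinner h0 (M.mulVec w) + vinner hperp (M.mulVec xv) := by
      rw [hdecomp, finner_add_left, finner_rankOne, finner_rankOne]
    have hfrobZ : frobSq Z = vnormSq h0 * vnormSq w + vnormSq hperp * vnormSq xv := by
      rw [← finner_self_re]
      nth_rewrite 1 [hdecomp]
      nth_rewrite 1 [hdecomp]
      rw [finner_add_left, finner_add_right, finner_add_right,
        finner_rankOne_rankOne, finner_rankOne_rankOne, finner_rankOne_rankOne,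
        finner_rankOne_rankOne, horth, horth', vinner_self, vinner_self, vinner_self,
        vinner_self]
      simp
    have key : vnorm h0 * vnorm w + vnorm hperp * vnorm xv
        ≤ Real.sqrt 2 * frob Z := by
      have h2 : frob Z = Real.sqrt ((vnorm h0 * vnorm w)^2 + (vnorm hperp * vnorm xv)^2) := by
        rw [frob, hfrobZ]
        congr 1
        rw [mul_pow, mul_pow, vnorm_sq, vnorm_sq, vnorm_sq, vnorm_sq]
      rw [h2]
      exact add_le_sqrt_two (mul_nonneg (vnorm_nonneg _) (vnorm_nonneg _))
        (mul_nonneg (vnorm_nonneg _) (vnorm_nonneg _))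
    calc ‖finner Z M‖ = ‖vinner h0 (M.mulVec w) + vinner hperp (M.mulVec xv)‖ := by rw [hffZ]
      _ ≤ ‖vinner h0 (M.mulVec w)‖ + ‖vinner hperp (M.mulVec xv)‖ := norm_add_le _ _
      _ ≤ vnorm h0 * (opNorm M * vnorm w) + vnorm hperp * (opNorm M * vnorm xv) := by
          gcongr
          · exact (vinner_cs _ _).trans
              (mul_le_mul_of_nonneg_left (vnorm_mulVec_le M w) (vnorm_nonneg h0))
          · exact (vinner_cs _ _).trans
              (mul_le_mul_of_nonneg_left (vnorm_mulVec_le M xv) (vnorm_nonneg hperp))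
      _ = opNorm M * (vnorm h0 * vnorm w + vnorm hperp * vnorm xv) := by ring
      _ ≤ opNorm M * (Real.sqrt 2 * frob Z) := by
          exact mul_le_mul_of_nonneg_left key (opNorm_nonneg M)
      _ = Real.sqrt 2 * opNorm M * frob Z := by ring


/-- cross-term bound. -/
theorem statement7
    {K N L s : ℕ} (hK : 0 < K) (hN : 0 < N) (hL : 0 < L) (hs : 0 < s)
    (b : Fin L → Fin K → ℂ)
    (a : Fin s → Fin L → Fin N → ℂ)
    (h0 : Fin s → Fin K → ℂ) (x0 : Fin s → Fin N → ℂ) :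
    ∀ (e : Fin L → ℂ) (h : Fin s → Fin K → ℂ) (x : Fin s → Fin N → ℂ),
      |(∑ i, finner (Hmap h x i - Hmap h0 x0 i) (calAdj b (a i) e)).re|
        ≤ Real.sqrt (2 * (s : ℝ)) * AadjNorm b a e
            * famFrob (fun i => Hmap h x i - Hmap h0 x0 i) := by
  intro e h x
  set A := AadjNorm b a e with hA
  set M : Fin s → Matrix (Fin K) (Fin N) ℂ := fun i => calAdj b (a i) e with hM
  set Zf : Fin s → Matrix (Fin K) (Fin N) ℂ := fun i => Hmap h x i - Hmap h0 x0 i with hZf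
  have hAnn : 0 ≤ A := Real.iSup_nonneg fun i => opNorm_nonneg _
  have hAle : ∀ i, opNorm (M i) ≤ A := fun i =>
    le_ciSup (Finite.bddAbove_range fun j => opNorm (calAdj b (a j) e)) i
  have step1 : |(∑ i, finner (Zf i) (M i)).re| ≤ ∑ i, ‖finner (Zf i) (M i)‖ := by
    have h1 := Complex.abs_re_le_norm (∑ i, finner (Zf i) (M i))
    exact h1.trans (norm_sum_le _ _)
  have step2 : ∀ i, ‖finner (Zf i) (M i)‖ ≤ Real.sqrt 2 * A * frob (Zf i) := by
    intro i
    have hb := block_bound (h0 i) (h i) (x0 i) (x i) (M i)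
    have hZi : Zf i = rankOne (h i) (x i) - rankOne (h0 i) (x0 i) := rfl
    rw [hZi]
    refine hb.trans ?_
    have := mul_le_mul_of_nonneg_right (hAle i) (frob_nonneg (rankOne (h i) (x i) - rankOne (h0 i) (x0 i)))
    nlinarith [Real.sqrt_nonneg 2, frob_nonneg (rankOne (h i) (x i) - rankOne (h0 i) (x0 i)),
      opNorm_nonneg (M i)]
  have hsum : ∑ i, frob (Zf i) ≤ Real.sqrt s * famFrob Zf := by
    have hcs := Finset.sum_mul_sq_le_sq_mul_sq Finset.univ
      (fun _ : Fin s => (1:ℝ)) (fun i => frob (Zf i))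
    have h1 : (∑ i, frob (Zf i))^2 ≤ (s:ℝ) * famFrobSq Zf := by
      have h2 : ∑ i : Fin s, frob (Zf i)^2 = famFrobSq Zf := by
        simp [famFrobSq, frob_sq]
      simpa [h2, Finset.card_univ] using hcs
    calc ∑ i, frob (Zf i)
        = Real.sqrt ((∑ i, frob (Zf i))^2) :=
          (Real.sqrt_sq (Finset.sum_nonneg fun i _ => frob_nonneg _)).symm
      _ ≤ Real.sqrt ((s:ℝ) * famFrobSq Zf) := Real.sqrt_le_sqrt h1
      _ = Real.sqrt s * famFrob Zf := by
          rw [Real.sqrt_mul (by positivity)]; rfl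
  calc |(∑ i, finner (Zf i) (M i)).re|
      ≤ ∑ i, ‖finner (Zf i) (M i)‖ := step1
    _ ≤ ∑ i, Real.sqrt 2 * A * frob (Zf i) := Finset.sum_le_sum fun i _ => step2 i
    _ = Real.sqrt 2 * A * ∑ i, frob (Zf i) := by rw [← Finset.mul_sum]
    _ ≤ Real.sqrt 2 * A * (Real.sqrt s * famFrob Zf) := by
        refine mul_le_mul_of_nonneg_left hsum ?_
        positivity
    _ = Real.sqrt (2 * s) * A * famFrob Zf := by
        rw [Real.sqrt_mul (by norm_num : (0:ℝ) ≤ 2)]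
        ring

end RGD
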